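/- If n ≥ 6 and C is a perfect code of Λ_n containing 0^n, then C contains no vertex of weight 1 or weight 2, and the number of weight-3 vertices in C equals |Λ_{n,2}|/3 = n(n-3)/6; in particular 3 divides n. -/

import Mathlib

def isFib {n : ℕ} (b : Fin n → Bool) : Prop :=
  ∀ i : Fin n, ∀ h : (i : ℕ) + 1 < n, ¬(b i = true ∧ b ⟨(i : ℕ) + 1, h⟩ = true)

def isLucas {n : ℕ} (b : Fin n → Bool) : Prop :=
  isFib b ∧ ∀ h0 : 0 < n, ¬(b ⟨0, h0⟩ = true ∧ b ⟨n - 1, by omega⟩ = true)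

def wt {n : ℕ} (b : Fin n → Bool) : ℕ :=
  (Finset.univ.filter fun i => b i = true).card

def lucasCube (n : ℕ) : SimpleGraph {b : Fin n → Bool // isLucas b} where
  Adj x y := hammingDist x.1 y.1 = 1
  symm := ⟨fun x y h => (hammingDist_comm y.1 x.1).trans h⟩
  loopless := ⟨fun x h => by simp only [hammingDist_self] at h; exact absurd h (by omega)⟩

def IsPerfectCode {V : Type*} (G : SimpleGraph V) (C : Set V) : Prop :=
  ∀ v : V, ∃! c : V, c ∈ C ∧ (v = c ∨ G.Adj v c)

def ch (a b : ℤ) : ℕ := if 0 ≤ a ∧ 0 ≤ b then a.toNat.choose b.toNat else 0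

section aux
variable {n : ℕ}

lemma wt_false : wt (fun _ : Fin n => false) = 0 := by simp [wt]

lemma hamming_zero (b : Fin n → Bool) : hammingDist b (fun _ => false) = wt b := by
  simp [hammingDist, wt]

lemma isLucas_mono {b b' : Fin n → Bool} (h : ∀ j, b' j = true → b j = true)
    (hb : isLucas b) : isLucas b' := by
  refine ⟨fun i hi hp => hb.1 i hi ⟨h _ hp.1, h _ hp.2⟩,
    fun h0 hp => hb.2 h0 ⟨h _ hp.1, h _ hp.2⟩⟩

lemma update_le {b : Fin n → Bool} {i : Fin n} :
    ∀ j, Function.update b i false j = true → b j = true := by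
  intro j hj
  rcases eq_or_ne j i with rfl | hne
  · simp [Function.update] at hj
  · rwa [Function.update_of_ne hne] at hj

lemma filter_update_false {b : Fin n → Bool} {i : Fin n} (h : b i = true) :
    (Finset.univ.filter fun j => Function.update b i false j = true)
      = (Finset.univ.filter fun j => b j = true).erase i := by
  ext j
  rcases eq_or_ne j i with rfl | hne
  · simp [Function.update]
  · simp [Function.update_of_ne hne, hne]

lemma wt_update_false {b : Fin n → Bool} {i : Fin n} (h : b i = true) :
    wt (Function.update b i false) + 1 = wt b := by
  rw [wt, filter_update_false h, Finset.card_erase_of_mem (by simp [h])]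
  have : 0 < wt b := Finset.card_pos.2 ⟨i, by simp [h]⟩
  rw [wt] at this ⊢
  omega

lemma wt_update_true {b : Fin n → Bool} {i : Fin n} (h : b i = false) :
    wt (Function.update b i true) = wt b + 1 := by
  have : (Finset.univ.filter fun j => Function.update b i true j = true)
      = insert i (Finset.univ.filter fun j => b j = true) := by
    ext j
    rcases eq_or_ne j i with rfl | hne
    · simp [Function.update]
    · simp [Function.update_of_ne hne, hne]
  rw [wt, this, Finset.card_insert_of_notMem (by simp [h]), wt]

lemma hamming_update {b : Fin n → Bool} {i : Fin n} {x : Bool} (h : b i ≠ x) :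
    hammingDist (Function.update b i x) b = 1 := by
  have : (Finset.univ.filter fun j => Function.update b i x j ≠ b j) = {i} := by
    ext j
    rcases eq_or_ne j i with rfl | hne
    · simp [Function.update, Ne.symm h]
    · simp [Function.update_of_ne hne, hne]
  simp [hammingDist, this]

lemma exists_of_hamming_one {x y : Fin n → Bool} (h : hammingDist x y = 1) :
    ∃ i, x i ≠ y i ∧ ∀ j, j ≠ i → x j = y j := by
  rw [hammingDist, Finset.card_eq_one] at h
  obtain ⟨i, hi⟩ := h
  refine ⟨i, ?_, fun j hj => ?_⟩
  · have : i ∈ Finset.univ.filter fun j => x j ≠ y j := hi ▸ Finset.mem_singleton_self i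
    simpa using this
  · by_contra hne
    have : j ∈ Finset.univ.filter fun j => x j ≠ y j := by simpa using hne
    rw [hi, Finset.mem_singleton] at this
    exact hj this

lemma up_char {x y : Fin n → Bool} (h : hammingDist x y = 1) (hw : wt y = wt x + 1) :
    ∃ j, x j = false ∧ y = Function.update x j true := by
  obtain ⟨i, hi, hrest⟩ := exists_of_hamming_one h
  have hy : y = Function.update x i (y i) := by
    funext j
    rcases eq_or_ne j i with rfl | hne
    · simp
    · rw [Function.update_of_ne hne, hrest j hne]
  cases hxi : x i
  · refine ⟨i, hxi, ?_⟩
    have hyi : y i = true := by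
      cases hyi : y i
      · exact absurd (hxi.trans hyi.symm) hi
      · rfl
    rwa [hyi] at hy
  · exfalso
    have hyi : y i = false := by
      cases hyi : y i
      · rfl
      · exact absurd (hxi.trans hyi.symm) hi
    rw [hyi] at hy
    have := wt_update_false (b := x) (i := i) hxi
    rw [← hy] at this
    omega

lemma drop_char {x y : Fin n → Bool} (h : hammingDist x y = 1) (hw : wt x = wt y + 1) :
    ∃ j, x j = true ∧ y = Function.update x j false := by
  obtain ⟨j, hj, hx⟩ := up_char (hammingDist_comm x y ▸ h) hw
  refine ⟨j, by rw [hx]; simp, ?_⟩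
  funext k
  rcases eq_or_ne k j with rfl | hne
  · simp [hj]
  · rw [Function.update_of_ne hne, hx, Function.update_of_ne hne]

lemma wt_pos_exists {b : Fin n → Bool} (h : 0 < wt b) : ∃ i, b i = true := by
  obtain ⟨i, hi⟩ := Finset.card_pos.1 h
  exact ⟨i, by simpa using hi⟩

lemma adj_wt {x y : Fin n → Bool} (h : hammingDist x y = 1) :
    wt y = wt x + 1 ∨ wt x = wt y + 1 := by
  obtain ⟨i, hi, hrest⟩ := exists_of_hamming_one h
  have hy : y = Function.update x i (y i) := by
    funext j
    rcases eq_or_ne j i with rfl | hne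
    · simp
    · rw [Function.update_of_ne hne, hrest j hne]
  cases hxi : x i
  · left
    have hyi : y i = true := by
      cases hyi : y i
      · exact absurd (hxi.trans hyi.symm) hi
      · rfl
    rw [hy, hyi, wt_update_true hxi]
  · right
    have hyi : y i = false := by
      cases hyi : y i
      · rfl
      · exact absurd (hxi.trans hyi.symm) hi
    rw [hy, hyi]
    have := wt_update_false hxi
    omega

end aux

section good
variable {n : ℕ}

lemma mem_update_true {u : Fin n → Bool} {i j : Fin n} (hu : ∀ k, u k = true ↔ k = i)
    (k : Fin n) : Function.update u j true k = true ↔ (k = i ∨ k = j) := by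
  rcases eq_or_ne k j with rfl | hne
  · simp
  · rw [Function.update_of_ne hne, hu]
    simp [hne]

lemma lucas_update_iff (hn : 6 ≤ n) {u : Fin n → Bool} {i j : Fin n}
    (hu : ∀ k, u k = true ↔ k = i) (hji : j ≠ i) :
    isLucas (Function.update u j true) ↔
      ((j : ℕ) ≠ ((i : ℕ) + 1) % n ∧ (j : ℕ) ≠ ((i : ℕ) + n - 1) % n) := by
  have hin : (i : ℕ) < n := i.isLt
  have hjn : (j : ℕ) < n := j.isLt
  constructor
  · intro hL
    constructor
    · intro hj
      rcases Nat.lt_or_ge ((i : ℕ) + 1) n with h | h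
      · rw [Nat.mod_eq_of_lt h] at hj
        refine hL.1 i h ⟨?_, ?_⟩
        · rw [mem_update_true hu]; left; rfl
        · rw [mem_update_true hu]; right; exact Fin.ext hj.symm
      · have hi1 : (i : ℕ) + 1 = n := by omega
        have hj0 : (j : ℕ) = 0 := by rw [hj, hi1, Nat.mod_self]
        refine hL.2 (by omega) ⟨?_, ?_⟩
        · rw [mem_update_true hu]; right; exact Fin.ext hj0.symm
        · rw [mem_update_true hu]; left
          apply Fin.ext
          show n - 1 = (i : ℕ)
          omega
    · intro hj
      rcases Nat.eq_zero_or_pos (i : ℕ) with h | h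
      · have hjv : (j : ℕ) = n - 1 := by
          rw [hj, h]; simp [Nat.mod_eq_of_lt (by omega : n - 1 < n)]
        refine hL.2 (by omega) ⟨?_, ?_⟩
        · rw [mem_update_true hu]; left; exact Fin.ext h.symm
        · rw [mem_update_true hu]; right; exact Fin.ext hjv.symm
      · have hjv : (j : ℕ) = (i : ℕ) - 1 := by
          rw [hj]
          have : (i : ℕ) + n - 1 = ((i : ℕ) - 1) + n := by omega
          rw [this, Nat.add_mod_right, Nat.mod_eq_of_lt (by omega)]
        have hlt : (j : ℕ) + 1 < n := by omega
        refine hL.1 j hlt ⟨?_, ?_⟩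
        · rw [mem_update_true hu]; right; rfl
        · rw [mem_update_true hu]; left; exact Fin.ext (by simp; omega)
  · rintro ⟨h1, h2⟩
    constructor
    · intro k hk hpair
      rw [mem_update_true hu] at hpair
      obtain ⟨hk1, hk2⟩ := hpair
      rw [mem_update_true hu] at hk2
      have hk1' : (k : ℕ) = i ∨ (k : ℕ) = j := by
        rcases hk1 with h | h <;> [left; right] <;> exact congrArg Fin.val h
      have hk2' : (k : ℕ) + 1 = i ∨ (k : ℕ) + 1 = j := by
        rcases hk2 with h | h <;> [left; right] <;> exact congrArg Fin.val h
      rcases hk1' with hA | hA <;> rcases hk2' with hB | hB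
      · omega
      · exact h1 (by rw [← hB, hA, Nat.mod_eq_of_lt (by omega)])
      · exact h2 (by
          have : (i : ℕ) + n - 1 = (j : ℕ) + n := by omega
          rw [this, Nat.add_mod_right, Nat.mod_eq_of_lt hjn])
      · omega
    · intro h0 hpair
      obtain ⟨hk1, hk2⟩ := hpair
      rw [mem_update_true hu] at hk1 hk2
      have hk1' : 0 = (i : ℕ) ∨ 0 = (j : ℕ) := by
        rcases hk1 with h | h <;> [left; right] <;> exact congrArg Fin.val h
      have hk2' : n - 1 = (i : ℕ) ∨ n - 1 = (j : ℕ) := by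
        rcases hk2 with h | h <;> [left; right] <;> exact congrArg Fin.val h
      rcases hk1' with hA | hA <;> rcases hk2' with hB | hB
      · omega
      · exact h2 (by rw [← hA, ← hB]; simp [Nat.mod_eq_of_lt (by omega : n - 1 < n)])
      · refine h1 ?_
        rw [← hA, ← hB]
        have e : n - 1 + 1 = n := by omega
        rw [e, Nat.mod_self]
      · omega

lemma goodJ_card (hn : 6 ≤ n) {u : Fin n → Bool} {i : Fin n}
    (hu : ∀ k, u k = true ↔ k = i)
    (P : Fin n → Prop) [DecidablePred P]
    (hP : ∀ j, P j ↔ (j ≠ i ∧ isLucas (Function.update u j true))) :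
    (Finset.univ.filter P).card = n - 3 := by
  have hin : (i : ℕ) < n := i.isLt
  set si : Fin n := ⟨((i : ℕ) + 1) % n, Nat.mod_lt _ (by omega)⟩ with hsi
  set pi : Fin n := ⟨((i : ℕ) + n - 1) % n, Nat.mod_lt _ (by omega)⟩ with hpi
  have hsival : (si : ℕ) = ((i : ℕ) + 1) % n := rfl
  have hpival : (pi : ℕ) = ((i : ℕ) + n - 1) % n := rfl
  have hsv : ((i : ℕ) + 1) % n = (i : ℕ) + 1 ∨ (((i : ℕ) + 1) % n = 0 ∧ (i : ℕ) + 1 = n) := by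
    rcases Nat.lt_or_ge ((i : ℕ) + 1) n with h | h
    · left; exact Nat.mod_eq_of_lt h
    · right
      have e : (i : ℕ) + 1 = n := by omega
      exact ⟨by rw [e, Nat.mod_self], e⟩
  have hpv : ((i : ℕ) + n - 1) % n = n - 1 ∧ (i : ℕ) = 0 ∨
      (((i : ℕ) + n - 1) % n = (i : ℕ) - 1 ∧ 1 ≤ (i : ℕ)) := by
    rcases Nat.eq_zero_or_pos (i : ℕ) with h | h
    · left
      rw [h]
      simp [Nat.mod_eq_of_lt (by omega : n - 1 < n)]
    · right
      have e : (i : ℕ) + n - 1 = ((i : ℕ) - 1) + n := by omega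
      rw [e, Nat.add_mod_right, Nat.mod_eq_of_lt (by omega)]
      exact ⟨rfl, h⟩
  have hfe : Finset.univ.filter P = Finset.univ \ {i, si, pi} := by
    ext j
    simp only [Finset.mem_filter, Finset.mem_univ, true_and, Finset.mem_sdiff,
      Finset.mem_insert, Finset.mem_singleton]
    rw [hP j]
    constructor
    · rintro ⟨hji, hL⟩
      rw [lucas_update_iff hn hu hji] at hL
      push_neg
      refine ⟨hji, fun h => hL.1 (congrArg Fin.val h), fun h => hL.2 (congrArg Fin.val h)⟩
    · intro h
      push_neg at h
      obtain ⟨hji, hs, hp⟩ := h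
      refine ⟨hji, (lucas_update_iff hn hu hji).2 ⟨?_, ?_⟩⟩
      · intro hc; exact hs (Fin.ext hc)
      · intro hc; exact hp (Fin.ext hc)
  rw [hfe, Finset.card_sdiff_of_subset (Finset.subset_univ _), Finset.card_univ, Fintype.card_fin]
  have hcard : ({i, si, pi} : Finset (Fin n)).card = 3 := by
    rw [Finset.card_insert_of_notMem, Finset.card_insert_of_notMem, Finset.card_singleton]
    · simp only [Finset.mem_singleton]
      intro h
      have := congrArg Fin.val h
      rw [hsival, hpival] at this
      omega
    · simp only [Finset.mem_insert, Finset.mem_singleton]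
      push_neg
      constructor
      · intro h
        have := congrArg Fin.val h
        rw [hsival] at this
        omega
      · intro h
        have := congrArg Fin.val h
        rw [hpival] at this
        omega
  omega

end good

/-- If n ≥ 6 and C is a perfect code of Λ_n containing 0^n, then C contains no
vertex of weight 1 or 2, the number of weight-3 vertices in C is n(n-3)/6,
and in particular 3 divides n. -/
theorem stmt12 (n : ℕ) (hn : 6 ≤ n) (C : Set {b : Fin n → Bool // isLucas b})
    (hC : IsPerfectCode (lucasCube n) C)
    (h0 : (⟨fun _ => false, by constructor <;> simp [isFib]⟩ :
        {b : Fin n → Bool // isLucas b}) ∈ C) :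
    (∀ c ∈ C, wt c.1 ≠ 1 ∧ wt c.1 ≠ 2)
    ∧ {c ∈ C | wt c.1 = 3}.ncard = n * (n - 3) / 6
    ∧ 3 ∣ n := by
  classical
  obtain ⟨z, hzval, hzC⟩ :
      ∃ z : {b : Fin n → Bool // isLucas b}, z.1 = (fun _ => false) ∧ z ∈ C :=
    ⟨_, rfl, h0⟩
  have hzw : wt z.1 = 0 := by rw [hzval, wt_false]
  -- the unique dominating codeword
  have hg0 : ∀ v : {b : Fin n → Bool // isLucas b},
      ∃ c, c ∈ C ∧ (v = c ∨ hammingDist v.1 c.1 = 1) ∧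
        ∀ c', c' ∈ C → (v = c' ∨ hammingDist v.1 c'.1 = 1) → c' = c := by
    intro v
    obtain ⟨c, hc, hu⟩ := hC v
    exact ⟨c, hc.1, hc.2, fun c' h1 h2 => hu c' ⟨h1, h2⟩⟩
  choose g hgC hgdom hgu using hg0
  have key : ∀ v c₁ c₂ : {b : Fin n → Bool // isLucas b}, c₁ ∈ C → c₂ ∈ C →
      (v = c₁ ∨ hammingDist v.1 c₁.1 = 1) → (v = c₂ ∨ hammingDist v.1 c₂.1 = 1) →
      c₁ = c₂ := by
    intro v c₁ c₂ h₁ h₂ hd₁ hd₂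
    rw [hgu v c₁ h₁ hd₁, hgu v c₂ h₂ hd₂]
  have noW1 : ∀ c ∈ C, wt c.1 ≠ 1 := by
    intro c hc h1
    have hd : hammingDist c.1 z.1 = 1 := by rw [hzval, hamming_zero, h1]
    have := key c c z hc hzC (Or.inl rfl) (Or.inr hd)
    rw [this, hzw] at h1
    omega
  have noW2 : ∀ c ∈ C, wt c.1 ≠ 2 := by
    intro c hc h2
    obtain ⟨i, hi⟩ := wt_pos_exists (b := c.1) (by omega)
    have hu1 : wt (Function.update c.1 i false) + 1 = wt c.1 := wt_update_false hi
    set u : {b : Fin n → Bool // isLucas b} :=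
      ⟨Function.update c.1 i false, isLucas_mono update_le c.2⟩ with hu
    have hd1 : hammingDist u.1 c.1 = 1 := hamming_update (by simp [hi])
    have hd0 : hammingDist u.1 z.1 = 1 := by
      rw [hzval, hamming_zero]
      show wt (Function.update c.1 i false) = 1
      omega
    have := key u c z hc hzC (Or.inr hd1) (Or.inr hd0)
    rw [this, hzw] at h2
    omega
  -- Finsets
  set F1 : Finset {b : Fin n → Bool // isLucas b} :=
    Finset.univ.filter (fun v => wt v.1 = 1) with hF1def
  set F2 : Finset {b : Fin n → Bool // isLucas b} :=
    Finset.univ.filter (fun v => wt v.1 = 2) with hF2def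
  set C3 : Finset {b : Fin n → Bool // isLucas b} :=
    Finset.univ.filter (fun c => c ∈ C ∧ wt c.1 = 3) with hC3def
  -- the drop count
  have drop_card : ∀ (c : {b : Fin n → Bool // isLucas b}) (k : ℕ), wt c.1 = k + 1 →
      (Finset.univ.filter fun v : {b : Fin n → Bool // isLucas b} =>
        wt v.1 = k ∧ hammingDist v.1 c.1 = 1).card = k + 1 := by
    intro c k hk
    rw [← hk, wt]
    refine (Finset.card_bij
      (fun i _ => (⟨Function.update c.1 i false, isLucas_mono update_le c.2⟩ :
        {b : Fin n → Bool // isLucas b})) ?_ ?_ ?_).symm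
    · intro a ha
      have hat : c.1 a = true := by simpa using ha
      simp only [Finset.mem_filter, Finset.mem_univ, true_and]
      constructor
      · have := wt_update_false hat
        omega
      · exact hamming_update (by simp [hat])
    · intro a₁ ha₁ a₂ ha₂ he
      by_contra hne
      have hat : c.1 a₁ = true := by simpa using ha₁
      have := congrArg (fun v => v.1 a₁) he
      simp only at this
      rw [Function.update_self, Function.update_of_ne hne, hat] at this
      exact Bool.false_ne_true this
    · intro v hv
      simp only [Finset.mem_filter, Finset.mem_univ, true_and] at hv
      obtain ⟨hwv, hdv⟩ := hv
      have hd' : hammingDist c.1 v.1 = 1 := by rwa [hammingDist_comm]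
      obtain ⟨j, hj, hvj⟩ := drop_char hd' (by omega)
      exact ⟨j, by simpa using hj, Subtype.ext hvj.symm⟩
  -- every weight-2 vertex is dominated by a weight-3 codeword
  have hmem2 : ∀ v ∈ F2, g v ∈ C3 := by
    intro v hv
    rw [hF2def, Finset.mem_filter] at hv
    have hv2 : wt v.1 = 2 := hv.2
    rw [hC3def, Finset.mem_filter]
    refine ⟨Finset.mem_univ _, hgC v, ?_⟩
    rcases hgdom v with h | h
    · exact absurd (h ▸ hv2) (noW2 _ (hgC v))
    · rcases adj_wt h with h3 | h1
      · omega
      · exact absurd (by omega : wt (g v).1 = 1) (noW1 _ (hgC v))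
  have hF2card : F2.card = C3.card * 3 := by
    rw [Finset.card_eq_sum_card_fiberwise hmem2]
    rw [Finset.sum_congr rfl (fun c hc => ?_), Finset.sum_const, smul_eq_mul]
    rw [hC3def, Finset.mem_filter] at hc
    obtain ⟨-, hcC, hc3⟩ := hc
    have : F2.filter (fun v => g v = c) =
        Finset.univ.filter fun v : {b : Fin n → Bool // isLucas b} =>
          wt v.1 = 2 ∧ hammingDist v.1 c.1 = 1 := by
      ext v
      rw [Finset.mem_filter, hF2def, Finset.mem_filter, Finset.mem_filter]
      simp only [Finset.mem_univ, true_and]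
      constructor
      · rintro ⟨hv2, rfl⟩
        refine ⟨hv2, ?_⟩
        rcases hgdom v with h | h
        · rw [← h] at hc3; omega
        · exact h
      · rintro ⟨hv2, hd⟩
        exact ⟨hv2, (hgu v c hcC (Or.inr hd)).symm⟩
    rw [this, drop_card c 2 hc3]
  -- the edge set between levels 1 and 2
  set E : Finset ({b : Fin n → Bool // isLucas b} × {b : Fin n → Bool // isLucas b}) :=
    Finset.univ.filter (fun p => wt p.1.1 = 1 ∧ wt p.2.1 = 2 ∧ hammingDist p.1.1 p.2.1 = 1)
    with hEdef
  have hE2 : E.card = F2.card * 2 := by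
    have hmaps : ∀ p ∈ E, p.2 ∈ F2 := by
      intro p hp
      rw [hEdef, Finset.mem_filter] at hp
      rw [hF2def, Finset.mem_filter]
      exact ⟨Finset.mem_univ _, hp.2.2.1⟩
    rw [Finset.card_eq_sum_card_fiberwise hmaps]
    rw [Finset.sum_congr rfl (fun v hv => ?_), Finset.sum_const, smul_eq_mul]
    rw [hF2def, Finset.mem_filter] at hv
    have hv2 : wt v.1 = 2 := hv.2
    have : (E.filter fun p => p.2 = v).card =
        (Finset.univ.filter fun u : {b : Fin n → Bool // isLucas b} =>
          wt u.1 = 1 ∧ hammingDist u.1 v.1 = 1).card := by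
      refine (Finset.card_bij (fun u _ => (u, v)) ?_ ?_ ?_).symm
      · intro u hu
        simp only [Finset.mem_filter, Finset.mem_univ, true_and] at hu
        rw [Finset.mem_filter, hEdef, Finset.mem_filter]
        exact ⟨⟨Finset.mem_univ _, hu.1, hv2, hu.2⟩, rfl⟩
      · intro a₁ _ a₂ _ he
        exact congrArg Prod.fst he
      · intro p hp
        rw [Finset.mem_filter, hEdef, Finset.mem_filter] at hp
        obtain ⟨⟨-, hp1, -, hpd⟩, hp2⟩ := hp
        refine ⟨p.1, ?_, ?_⟩
        · simp only [Finset.mem_filter, Finset.mem_univ, true_and]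
          exact ⟨hp1, hp2 ▸ hpd⟩
        · exact Prod.ext rfl hp2.symm
    rw [this, drop_card v 1 hv2]
  have hE1 : E.card = F1.card * (n - 3) := by
    have hmaps : ∀ p ∈ E, p.1 ∈ F1 := by
      intro p hp
      rw [hEdef, Finset.mem_filter] at hp
      rw [hF1def, Finset.mem_filter]
      exact ⟨Finset.mem_univ _, hp.2.1⟩
    rw [Finset.card_eq_sum_card_fiberwise hmaps]
    rw [Finset.sum_congr rfl (fun u hu => ?_), Finset.sum_const, smul_eq_mul]
    rw [hF1def, Finset.mem_filter] at hu
    have hu1 : wt u.1 = 1 := hu.2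
    obtain ⟨i, hifil⟩ := Finset.card_eq_one.1 hu1
    have hchar : ∀ k, u.1 k = true ↔ k = i := by
      intro k
      constructor
      · intro hk
        have : k ∈ Finset.univ.filter fun j => u.1 j = true := by simp [hk]
        rw [hifil, Finset.mem_singleton] at this
        exact this
      · intro hk
        have hmem : i ∈ Finset.univ.filter fun j => u.1 j = true := by
          rw [hifil]; exact Finset.mem_singleton_self i
        rw [hk]
        simpa using hmem
    have hbij : (Finset.univ.filter fun j : Fin n =>
        j ≠ i ∧ isLucas (Function.update u.1 j true)).card =
        (E.filter fun p => p.1 = u).card := by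
      refine Finset.card_bij (fun j hj =>
        (u, ⟨Function.update u.1 j true, (Finset.mem_filter.1 hj).2.2⟩)) ?_ ?_ ?_
      · intro j hj
        obtain ⟨-, hji, hjL⟩ := Finset.mem_filter.1 hj
        have hjf : u.1 j = false := by
          cases hc : u.1 j
          · rfl
          · exact absurd ((hchar j).1 hc) hji
        rw [Finset.mem_filter, hEdef, Finset.mem_filter]
        refine ⟨⟨Finset.mem_univ _, hu1, ?_, ?_⟩, rfl⟩
        · show wt (Function.update u.1 j true) = 2
          rw [wt_update_true hjf, hu1]
        · show hammingDist u.1 (Function.update u.1 j true) = 1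
          rw [hammingDist_comm]
          exact hamming_update (by simp [hjf])
      · intro j₁ hj₁ j₂ hj₂ he
        by_contra hne
        obtain ⟨-, hji, -⟩ := Finset.mem_filter.1 hj₂
        have hjf : u.1 j₁ = false := by
          cases hc : u.1 j₁
          · rfl
          · exact absurd ((hchar j₁).1 hc)
              (Finset.mem_filter.1 hj₁).2.1
        have := congrArg (fun p => p.2.1 j₁) he
        simp only at this
        rw [Function.update_self, Function.update_of_ne hne, hjf] at this
        simp at this
      · intro p hp
        rw [Finset.mem_filter, hEdef, Finset.mem_filter] at hp
        obtain ⟨⟨-, -, hp2, hpd⟩, hp1⟩ := hp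
        rw [hp1] at hpd
        obtain ⟨j, hjf, hpj⟩ := up_char hpd (by omega)
        have hji : j ≠ i := by
          intro h
          rw [(hchar j).2 h] at hjf
          simp at hjf
        refine ⟨j, ?_, ?_⟩
        · rw [Finset.mem_filter]
          exact ⟨Finset.mem_univ _, hji, hpj ▸ p.2.2⟩
        · exact Prod.ext hp1.symm (Subtype.ext hpj.symm)
    rw [← hbij, goodJ_card hn hchar _ (fun j => Iff.rfl)]
  have hF1card : F1.card = n := by
    have hLe : ∀ i : Fin n, isLucas (fun k : Fin n => decide (k = i)) := by
      intro i
      constructor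
      · intro k hk hp
        simp only [decide_eq_true_eq] at hp
        have h1 : (k : ℕ) = i := congrArg Fin.val hp.1
        have h2 : (k : ℕ) + 1 = i := congrArg Fin.val hp.2
        omega
      · intro h0 hp
        simp only [decide_eq_true_eq] at hp
        have h1 : (0 : ℕ) = i := congrArg Fin.val hp.1
        have h2 : n - 1 = (i : ℕ) := congrArg Fin.val hp.2
        omega
    have : (Finset.univ : Finset (Fin n)).card = F1.card := by
      refine Finset.card_bij (fun i _ =>
        (⟨fun k => decide (k = i), hLe i⟩ : {b : Fin n → Bool // isLucas b})) ?_ ?_ ?_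
      · intro i _
        rw [hF1def, Finset.mem_filter]
        refine ⟨Finset.mem_univ _, ?_⟩
        show (Finset.univ.filter fun k : Fin n => decide (k = i) = true).card = 1
        have : (Finset.univ.filter fun k : Fin n => decide (k = i) = true) = {i} := by
          ext k; simp
        rw [this, Finset.card_singleton]
      · intro i₁ _ i₂ _ he
        have := congrArg (fun v => v.1 i₁) he
        simp only [decide_eq_true_eq] at this
        simpa using this.symm
      · intro u hu
        rw [hF1def, Finset.mem_filter] at hu
        obtain ⟨i, hifil⟩ := Finset.card_eq_one.1 hu.2
        refine ⟨i, Finset.mem_univ _, Subtype.ext ?_⟩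
        funext k
        have hchar : u.1 k = true ↔ k = i := by
          constructor
          · intro hk
            have : k ∈ Finset.univ.filter fun j => u.1 j = true := by simp [hk]
            rw [hifil, Finset.mem_singleton] at this
            exact this
          · intro hk
            have hmem : i ∈ Finset.univ.filter fun j => u.1 j = true := by
              rw [hifil]; exact Finset.mem_singleton_self i
            rw [hk]
            simpa using hmem
        rcases eq_or_ne k i with rfl | hne
        · simp [hchar.2 rfl]
        · have : u.1 k = false := by
            cases hc : u.1 k
            · rfl
            · exact absurd (hchar.1 hc) hne
          simp [this, hne]
    rw [← this, Finset.card_univ, Fintype.card_fin]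
  -- assemble the counts
  have hcount : n * (n - 3) = C3.card * 6 := by
    have := hE1
    rw [hE2, hF1card, hF2card] at this
    omega
  refine ⟨fun c hc => ⟨noW1 c hc, noW2 c hc⟩, ?_, ?_⟩
  · have hsets : {c ∈ C | wt c.1 = 3} = ↑C3 := by
      ext c
      rw [hC3def]
      simp [Set.mem_setOf_eq]
    rw [hsets, Set.ncard_coe_finset]
    omega
  · have h3 : (3 : ℕ) ∣ n * (n - 3) := ⟨C3.card * 2, by omega⟩
    rcases (Nat.Prime.dvd_mul Nat.prime_three).1 h3 with h | h
    · exact h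
    · omega
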